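/- The 8×8 complex matrix U₅ = S₀⊗I₂⊗I₂ + (1/2)·S₃⊗σ₁⊗I₂ + (1/2)·S₃⊗(σ₁σ₃)⊗σ₃ + S₃⊗S₃⊗S₂ + S₃⊗S₀⊗S₁ is unitary and has Schmidt rank exactly 5. -/
import Mathlib

open Matrix Kronecker Complex

/-- The tripartite Schmidt rank of an 8×8 complex matrix, viewed as a matrix on
ℂ² ⊗ ℂ² ⊗ ℂ² via Kronecker products: the least `r` such that
`U = ∑ j, A j ⊗ₖ (B j ⊗ₖ C j)` with 2×2 matrices `A j`, `B j`, `C j`. -/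
noncomputable def sr (U : Matrix (Fin 2 × Fin 2 × Fin 2) (Fin 2 × Fin 2 × Fin 2) ℂ) : ℕ :=
  sInf {r | ∃ A B C : Fin r → Matrix (Fin 2) (Fin 2) ℂ,
    U = ∑ j, A j ⊗ₖ (B j ⊗ₖ C j)}

def S0 : Matrix (Fin 2) (Fin 2) ℂ := !![1, 0; 0, 0]
def S1 : Matrix (Fin 2) (Fin 2) ℂ := !![0, 1; 0, 0]
def S2 : Matrix (Fin 2) (Fin 2) ℂ := !![0, 0; 1, 0]
def S3 : Matrix (Fin 2) (Fin 2) ℂ := !![0, 0; 0, 1]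
def σ1 : Matrix (Fin 2) (Fin 2) ℂ := !![0, 1; 1, 0]
def σ2 : Matrix (Fin 2) (Fin 2) ℂ := !![0, -I; I, 0]
def σ3 : Matrix (Fin 2) (Fin 2) ℂ := !![1, 0; 0, -1]
def I2 : Matrix (Fin 2) (Fin 2) ℂ := 1

noncomputable def U₅ : Matrix (Fin 2 × Fin 2 × Fin 2) (Fin 2 × Fin 2 × Fin 2) ℂ :=
  S0 ⊗ₖ (I2 ⊗ₖ I2) + (1 / 2 : ℂ) • (S3 ⊗ₖ (σ1 ⊗ₖ I2)) +
    (1 / 2 : ℂ) • (S3 ⊗ₖ ((σ1 * σ3) ⊗ₖ σ3)) + S3 ⊗ₖ (S3 ⊗ₖ S2) + S3 ⊗ₖ (S0 ⊗ₖ S1)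

/-! ### Auxiliary matrices for the lower bound -/

/-- Realignment of the lower-right 4×4 block of `U₅`. -/
noncomputable def Mt : Matrix (Fin 2 × Fin 2) (Fin 2 × Fin 2) ℂ :=
  Matrix.of fun bb cc =>
    (1 / 2 : ℂ) * (σ1 bb.1 bb.2 * I2 cc.1 cc.2) +
      (1 / 2 : ℂ) * ((σ1 * σ3) bb.1 bb.2 * σ3 cc.1 cc.2) +
      S3 bb.1 bb.2 * S2 cc.1 cc.2 + S0 bb.1 bb.2 * S1 cc.1 cc.2

/-- Realignment of the upper-left 4×4 block of `U₅` (the identity). -/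
noncomputable def Em : Matrix (Fin 2 × Fin 2) (Fin 2 × Fin 2) ℂ :=
  Matrix.of fun bb cc => I2 bb.1 bb.2 * I2 cc.1 cc.2

noncomputable def W1 : Matrix (Fin 2 × Fin 2) (Fin 2 × Fin 2) ℂ :=
  (1 / 2 : ℂ) • (σ1 ⊗ₖ I2) + (1 / 2 : ℂ) • ((σ1 * σ3) ⊗ₖ σ3) + S3 ⊗ₖ S2 + S0 ⊗ₖ S1

lemma kronCT {l m n p : Type*} (A : Matrix l m ℂ) (B : Matrix n p ℂ) :
    (A ⊗ₖ B)ᴴ = Aᴴ ⊗ₖ Bᴴ := by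
  ext ⟨i, j⟩ ⟨k, l⟩
  simp [Matrix.conjTranspose_apply, Matrix.kroneckerMap_apply, mul_comm]

lemma hU5split :
    U₅ = S0 ⊗ₖ ((1 : Matrix (Fin 2) (Fin 2) ℂ) ⊗ₖ (1 : Matrix (Fin 2) (Fin 2) ℂ)) + S3 ⊗ₖ W1 := by
  unfold U₅ W1 I2
  simp only [Matrix.kronecker_add, Matrix.kronecker_smul]
  abel

set_option maxHeartbeats 1000000 in
lemma hW1unit : W1 * W1ᴴ = 1 := by
  ext ⟨q, r⟩ ⟨q', r'⟩
  fin_cases q <;> fin_cases r <;> fin_cases q' <;> fin_cases r' <;>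
    norm_num [W1, S0, S1, S2, S3, σ1, σ3, I2, Matrix.mul_apply, Matrix.conjTranspose_apply,
      Matrix.kroneckerMap_apply, Fintype.sum_prod_type, Fin.sum_univ_two, Matrix.one_apply,
      Prod.ext_iff]

lemma U₅unitary : U₅ ∈ Matrix.unitaryGroup (Fin 2 × Fin 2 × Fin 2) ℂ := by
  rw [Matrix.mem_unitaryGroup_iff]
  have hS0 : S0ᴴ = S0 := by ext i j; fin_cases i <;> fin_cases j <;> simp [S0]
  have hS3 : S3ᴴ = S3 := by ext i j; fin_cases i <;> fin_cases j <;> simp [S3]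
  have h00 : S0 * S0 = S0 := by
    ext i j; fin_cases i <;> fin_cases j <;> simp [S0, Matrix.mul_apply, Fin.sum_univ_two]
  have h33 : S3 * S3 = S3 := by
    ext i j; fin_cases i <;> fin_cases j <;> simp [S3, Matrix.mul_apply, Fin.sum_univ_two]
  have h03 : S0 * S3 = 0 := by
    ext i j; fin_cases i <;> fin_cases j <;> simp [S0, S3, Matrix.mul_apply, Fin.sum_univ_two]
  have h30 : S3 * S0 = 0 := by
    ext i j; fin_cases i <;> fin_cases j <;> simp [S0, S3, Matrix.mul_apply, Fin.sum_univ_two]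
  have hsum : S0 + S3 = 1 := by
    ext i j; fin_cases i <;> fin_cases j <;> simp [S0, S3, Matrix.one_apply]
  rw [Matrix.star_eq_conjTranspose, hU5split]
  rw [Matrix.conjTranspose_add, kronCT, kronCT, kronCT, hS0, hS3, Matrix.conjTranspose_one]
  rw [add_mul, mul_add, mul_add]
  simp only [← Matrix.mul_kronecker_mul]
  rw [h00, h33, h03, h30, hW1unit]
  simp [Matrix.one_kronecker_one, ← Matrix.add_kronecker, hsum]

set_option maxHeartbeats 1000000 in
lemma hGMt : Mtᵀ * Mt = 1 := by
  ext ⟨b, b'⟩ ⟨c, c'⟩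
  fin_cases b <;> fin_cases b' <;> fin_cases c <;> fin_cases c' <;>
    norm_num [Mt, S0, S1, S2, S3, σ1, σ3, I2, Matrix.mul_apply, Matrix.transpose_apply,
      Fintype.sum_prod_type, Fin.sum_univ_two, Matrix.one_apply, Prod.ext_iff]

set_option maxHeartbeats 1000000 in
lemma hEGE : Em * (Mtᵀ * Em) = 0 := by
  ext ⟨b, b'⟩ ⟨c, c'⟩
  fin_cases b <;> fin_cases b' <;> fin_cases c <;> fin_cases c' <;>
    norm_num [Em, Mt, S0, S1, S2, S3, σ1, σ3, I2, Matrix.mul_apply, Matrix.transpose_apply,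
      Fintype.sum_prod_type, Fin.sum_univ_two, Matrix.one_apply, Prod.ext_iff]

set_option maxHeartbeats 1000000 in
/-- Key lemma: `U₅` admits no decomposition with 4 product terms. -/
lemma no4 (A B C : Fin 4 → Matrix (Fin 2) (Fin 2) ℂ)
    (h : U₅ = ∑ j, A j ⊗ₖ (B j ⊗ₖ C j)) : False := by
  have hent : ∀ p q r p' q' r' : Fin 2,
      (∑ j, A j p p' * (B j q q' * C j r r')) = U₅ (p, q, r) (p', q', r') := by
    intro p q r p' q' r'
    rw [h]
    simp [Matrix.sum_apply, Matrix.kroneckerMap_apply]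
  classical
  set ι := (Fin 2 × Fin 2)
  let e : ι ≃ Fin 4 := finProdFinEquiv.trans (finCongr (by norm_num))
  set a : Fin 4 → ℂ := fun j => A j 0 0 with ha
  set d : Fin 4 → ℂ := fun j => A j 1 1 with hd
  set V : Matrix ι (Fin 4) ℂ := Matrix.of (fun i j => B j i.1 i.2) with hV
  set W : Matrix (Fin 4) ι ℂ := Matrix.of (fun j k => C j k.1 k.2) with hW
  have triple : ∀ (x : Fin 4 → ℂ) (i k : ι),
      (V * Matrix.diagonal x * W) i k = ∑ j, x j * (B j i.1 i.2 * C j k.1 k.2) := by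
    intro x i k
    rw [Matrix.mul_assoc, Matrix.mul_apply]
    simp only [Matrix.diagonal_mul, Matrix.of_apply, hV, hW]
    exact Finset.sum_congr rfl fun j _ => by ring
  have hUMt : ∀ b b' c c' : Fin 2, U₅ (1, b, c) (1, b', c') = Mt (b, b') (c, c') := by
    intro b b' c c'
    simp [U₅, Mt, S0, S3, Matrix.kroneckerMap_apply, Matrix.add_apply, Matrix.smul_apply,
      smul_eq_mul]
  have hUEm : ∀ b b' c c' : Fin 2, U₅ (0, b, c) (0, b', c') = Em (b, b') (c, c') := by
    intro b b' c c'
    simp [U₅, Em, S0, S3, Matrix.kroneckerMap_apply, Matrix.add_apply, Matrix.smul_apply,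
      smul_eq_mul]
  have hM2 : Mt = V * Matrix.diagonal d * W := by
    ext i k
    rw [triple]
    obtain ⟨b, b'⟩ := i
    obtain ⟨c, c'⟩ := k
    rw [show (∑ j, d j * (B j b b' * C j c c')) = ∑ j, A j 1 1 * (B j b b' * C j c c') from rfl,
      hent, hUMt]
  have hE2 : Em = V * Matrix.diagonal a * W := by
    ext i k
    rw [triple]
    obtain ⟨b, b'⟩ := i
    obtain ⟨c, c'⟩ := k
    rw [show (∑ j, a j * (B j b b' * C j c c')) = ∑ j, A j 0 0 * (B j b b' * C j c c') from rfl,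
      hent, hUEm]
  -- the pencil argument
  set P : Matrix ι (Fin 4) ℂ := Mtᵀ * V with hP
  have h1 : P * (Matrix.diagonal d * W) = 1 := by
    calc P * (Matrix.diagonal d * W) = Mtᵀ * (V * Matrix.diagonal d * W) := by
          rw [hP]; simp only [Matrix.mul_assoc]
      _ = Mtᵀ * Mt := by rw [← hM2]
      _ = 1 := hGMt
  have h2 : (Matrix.diagonal d * W) * P = 1 := (Matrix.mul_eq_one_comm_of_equiv e).mp h1
  set Q : Matrix (Fin 4) (Fin 4) ℂ := W * P with hQ
  have hDQ : Matrix.diagonal d * Q = 1 := by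
    rw [hQ, ← Matrix.mul_assoc]; exact h2
  have hdq : ∀ j, d j * Q j j = 1 := by
    intro j
    have := congrFun (congrFun hDQ j) j
    simpa [Matrix.diagonal_mul, Matrix.one_apply] using this
  have hdne : ∀ j, d j ≠ 0 := by
    intro j hj
    have := hdq j
    rw [hj, zero_mul] at this
    exact zero_ne_one this
  have hQdiag : Q = Matrix.diagonal (fun j => Q j j) := by
    ext i j
    by_cases hij : i = j
    · subst hij; simp
    · have := congrFun (congrFun hDQ i) j
      rw [Matrix.diagonal_mul] at this
      rw [Matrix.one_apply_ne hij] at this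
      have h0 : Q i j = 0 := by
        rcases mul_eq_zero.mp this with h | h
        · exact absurd h (hdne i)
        · exact h
      rw [h0, Matrix.diagonal_apply_ne _ hij]
  -- N² = 0
  have hNN : (P * Matrix.diagonal a * W) * (P * Matrix.diagonal a * W) = 0 := by
    have hN : Mtᵀ * Em = P * Matrix.diagonal a * W := by
      rw [hE2, hP]; simp only [Matrix.mul_assoc]
    rw [← hN]
    calc Mtᵀ * Em * (Mtᵀ * Em) = Mtᵀ * (Em * (Mtᵀ * Em)) := by simp only [Matrix.mul_assoc]
      _ = 0 := by rw [hEGE, Matrix.mul_zero]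
  have key : Matrix.diagonal a * Q * Matrix.diagonal a * Q = 0 := by
    have h0 : (Matrix.diagonal d * W) *
        ((P * Matrix.diagonal a * W) * (P * Matrix.diagonal a * W)) * P = 0 := by
      rw [hNN, Matrix.mul_zero, Matrix.zero_mul]
    have h0' : (Matrix.diagonal d * W * P) * (Matrix.diagonal a * (W * P)) *
        (Matrix.diagonal a * (W * P)) = 0 := by
      rw [← h0]; simp only [Matrix.mul_assoc]
    rw [h2, Matrix.one_mul, ← hQ] at h0'
    rw [← h0']
    simp only [Matrix.mul_assoc]
  have ha0 : ∀ j, a j = 0 := by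
    intro j
    have hk : Matrix.diagonal a * Matrix.diagonal (fun j => Q j j) * Matrix.diagonal a *
        Matrix.diagonal (fun j => Q j j) = 0 := by rw [← hQdiag]; exact key
    rw [Matrix.diagonal_mul_diagonal, Matrix.diagonal_mul_diagonal,
      Matrix.diagonal_mul_diagonal] at hk
    have hjj : a j * Q j j * a j * Q j j = 0 := by
      have h' := congrFun (congrFun hk j) j
      simpa [Matrix.diagonal_apply_eq] using h'
    have h0 : a j * Q j j = 0 := mul_self_eq_zero.mp (by rw [← hjj]; ring)
    rcases mul_eq_zero.mp h0 with h | h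
    · exact h
    · exfalso
      have := hdq j
      rw [h, mul_zero] at this
      exact zero_ne_one this
  have hA0 : Matrix.diagonal a = 0 := by
    rw [show a = fun _ => (0:ℂ) from funext ha0]
    simp [Matrix.diagonal_zero]
  have hEm0 : Em = 0 := by
    rw [hE2, hA0, Matrix.mul_zero, Matrix.zero_mul]
  have : Em ((0:Fin 2), (0:Fin 2)) ((0:Fin 2), (0:Fin 2)) = 1 := by
    norm_num [Em, I2, Matrix.one_apply]
  rw [hEm0] at this
  simp at this

lemma pad (r : ℕ) (hr : r ≤ 4) (A B C : Fin r → Matrix (Fin 2) (Fin 2) ℂ)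
    (h : U₅ = ∑ j, A j ⊗ₖ (B j ⊗ₖ C j)) : False := by
  classical
  set F : ℕ → Matrix (Fin 2 × Fin 2 × Fin 2) (Fin 2 × Fin 2 × Fin 2) ℂ :=
    fun n => if hn : n < r then A ⟨n, hn⟩ ⊗ₖ (B ⟨n, hn⟩ ⊗ₖ C ⟨n, hn⟩) else 0 with hF
  apply no4 (fun j : Fin 4 => if hj : (j : ℕ) < r then A ⟨j, hj⟩ else 0)
    (fun j : Fin 4 => if hj : (j : ℕ) < r then B ⟨j, hj⟩ else 0)
    (fun j : Fin 4 => if hj : (j : ℕ) < r then C ⟨j, hj⟩ else 0)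
  rw [h]
  have step1 : ∀ j : Fin 4,
      (if hj : (j : ℕ) < r then A ⟨j, hj⟩ else 0) ⊗ₖ
        ((if hj : (j : ℕ) < r then B ⟨j, hj⟩ else 0) ⊗ₖ
          (if hj : (j : ℕ) < r then C ⟨j, hj⟩ else 0)) = F j := by
    intro j
    by_cases hj : (j : ℕ) < r
    · simp [hF, hj]
    · simp [hF, hj, Matrix.zero_kronecker]
  calc ∑ j : Fin r, A j ⊗ₖ (B j ⊗ₖ C j) = ∑ j : Fin r, F j := by
        refine Finset.sum_congr rfl fun j _ => ?_
        simp [hF, j.isLt]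
    _ = ∑ n ∈ Finset.range r, F n := Fin.sum_univ_eq_sum_range F r
    _ = ∑ n ∈ Finset.range 4, F n := by
        refine Finset.sum_subset (Finset.range_subset_range.2 hr) fun x _ hx => ?_
        have : ¬ x < r := by simpa using hx
        simp [hF, this]
    _ = ∑ j : Fin 4, F j := (Fin.sum_univ_eq_sum_range F 4).symm
    _ = _ := by
        refine Finset.sum_congr rfl fun j _ => ?_
        exact (step1 j).symm

lemma upperdec : U₅ = ∑ j : Fin 5,
    (![S0, (1/2 : ℂ) • S3, (1/2 : ℂ) • S3, S3, S3] j) ⊗ₖ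
      ((![I2, σ1, σ1 * σ3, S3, S0] j) ⊗ₖ (![I2, I2, σ3, S2, S1] j)) := by
  simp only [Fin.sum_univ_five, Matrix.cons_val_zero, Matrix.cons_val_one, Matrix.head_cons,
    Matrix.cons_val_two, Matrix.tail_cons, Matrix.cons_val_three, Matrix.cons_val_four,
    Matrix.smul_kronecker]
  rfl

theorem stmt17 : U₅ ∈ Matrix.unitaryGroup (Fin 2 × Fin 2 × Fin 2) ℂ ∧ sr U₅ = 5 := by
  refine ⟨U₅unitary, ?_⟩
  have h5mem : 5 ∈ {r | ∃ A B C : Fin r → Matrix (Fin 2) (Fin 2) ℂ,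
      U₅ = ∑ j, A j ⊗ₖ (B j ⊗ₖ C j)} :=
    ⟨![S0, (1/2 : ℂ) • S3, (1/2 : ℂ) • S3, S3, S3], ![I2, σ1, σ1 * σ3, S3, S0],
      ![I2, I2, σ3, S2, S1], upperdec⟩
  have hsr : sr U₅ = sInf {r | ∃ A B C : Fin r → Matrix (Fin 2) (Fin 2) ℂ,
      U₅ = ∑ j, A j ⊗ₖ (B j ⊗ₖ C j)} := rfl
  have hle : sr U₅ ≤ 5 := by rw [hsr]; exact Nat.sInf_le h5mem
  have hmem : sr U₅ ∈ {r | ∃ A B C : Fin r → Matrix (Fin 2) (Fin 2) ℂ,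
      U₅ = ∑ j, A j ⊗ₖ (B j ⊗ₖ C j)} := by
    rw [hsr]; exact Nat.sInf_mem ⟨5, h5mem⟩
  obtain ⟨A, B, C, hd⟩ := hmem
  have hnot : ¬ sr U₅ ≤ 4 := by
    intro hle4
    exact pad (sr U₅) hle4 A B C hd
  exact le_antisymm hle (Nat.not_le.mp hnot)
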